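/- The entries of the projection p = |ψ_1⟩⟨ψ_1| + |ψ_2⟩⟨ψ_2| all lie in the subalgebra A(S^4_θ) generated by α, β, α*, β*, x; explicitly, 2p equals the matrix with rows (1+x, 0, α, β), (0, 1+x, −μβ*, μ̄α*), (α*, −μ̄β, 1−x, 0), (β*, μα, 0, 1−x). -/

import Mathlib

noncomputable section

/-- The deformation matrix λ'^{ij} of the sphere S^7_{θ'}: λ'^{12}=λ'^{34}=1 and
λ'^{13}=λ'^{14}=λ'^{23}=λ'^{24}=μ (indices 0-based), with λ'^{ji} = (λ'^{ij})⁻¹. -/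
def lam7 (μ : ℂ) (i j : Fin 4) : ℂ :=
  if ((i : ℕ) < 2 ∧ (j : ℕ) < 2) ∨ (2 ≤ (i : ℕ) ∧ 2 ≤ (j : ℕ)) then 1
  else if (i : ℕ) < 2 then μ else μ⁻¹

variable {A : Type} [Ring A] [Algebra ℂ A] [StarRing A] [StarModule ℂ A]

/-- The defining relations of A(S^7_{θ'}): commutation relations among the generators and
their adjoints, and the sphere relation Σ_i z^i z̄^i = 1. -/
def S7Rel (μ : ℂ) (z : Fin 4 → A) : Prop :=
  (∀ i j, z i * z j = lam7 μ i j • (z j * z i)) ∧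
  (∀ i j, star (z i) * z j = lam7 μ j i • (z j * star (z i))) ∧
  (∀ i j, star (z i) * star (z j) = lam7 μ i j • (star (z j) * star (z i))) ∧
  (∑ i, z i * star (z i)) = 1

/-- α = 2(z^1 z̄^3 + z^2 z̄^4). -/
def elA (z : Fin 4 → A) : A := 2 * (z 0 * star (z 2) + z 1 * star (z 3))

/-- β = 2(−z^1 z^4 + z^2 z^3). -/
def elB (z : Fin 4 → A) : A := 2 * (-(z 0 * z 3) + z 1 * z 2)

/-- x = z^1 z̄^1 + z^2 z̄^2 − z^3 z̄^3 − z^4 z̄^4. -/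
def elX (z : Fin 4 → A) : A :=
  z 0 * star (z 0) + z 1 * star (z 1) - z 2 * star (z 2) - z 3 * star (z 3)

/-- |ψ_1⟩ = (z^1, −z̄^2, z^3, −z̄^4)^t. -/
def psi1 (z : Fin 4 → A) : Fin 4 → A := ![z 0, -star (z 1), z 2, -star (z 3)]

/-- |ψ_2⟩ = (z^2, z̄^1, z^4, z̄^3)^t. -/
def psi2 (z : Fin 4 → A) : Fin 4 → A := ![z 1, star (z 0), z 3, star (z 2)]

/-- The projection p = |ψ_1⟩⟨ψ_1| + |ψ_2⟩⟨ψ_2| as a 4×4 matrix. -/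
def projP (z : Fin 4 → A) : Matrix (Fin 4) (Fin 4) A :=
  fun i j => psi1 z i * star (psi1 z j) + psi2 z i * star (psi2 z j)

/-- The entries of p = |ψ_1⟩⟨ψ_1| + |ψ_2⟩⟨ψ_2| lie in the subalgebra A(S^4_θ)
generated by α, β, α*, β*, x; explicitly 2p is the displayed matrix. -/
theorem stmt7 (μ : ℂ) (hμ : ‖μ‖ = 1) (z : Fin 4 → A) (hrel : S7Rel μ z) :
    (∀ i j, projP z i j ∈ StarAlgebra.adjoin ℂ ({elA z, elB z, elX z} : Set A)) ∧
    (2 : ℕ) • projP z =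
      !![1 + elX z, 0, elA z, elB z;
         0, 1 + elX z, -(μ • star (elB z)), (star μ) • star (elA z);
         star (elA z), -((star μ) • elB z), 1 - elX z, 0;
         star (elB z), μ • elA z, 0, 1 - elX z] := by

  obtain ⟨h1, h2, h3, h4⟩ := hrel
  have hinv : μ⁻¹ = star μ := by
    refine inv_eq_of_mul_eq_one_right ?_
    rw [Complex.star_def, Complex.mul_conj]
    norm_cast
    simp [Complex.normSq_eq_norm_sq, hμ]
  have hsum : z 0 * star (z 0) + z 1 * star (z 1) + z 2 * star (z 2) + z 3 * star (z 3)
      = 1 := by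
    have := h4; rwa [Fin.sum_univ_four] at this
  have c01 : z 0 * z 1 = z 1 * z 0 := by
    have := h1 0 1; rwa [show lam7 μ 0 1 = 1 by norm_num [lam7, show ((2:Fin 4):ℕ) = 2 from rfl, show ((3:Fin 4):ℕ) = 3 from rfl], one_smul] at this
  have c21 : z 2 * z 1 = star μ • (z 1 * z 2) := by
    have := h1 2 1; rwa [show lam7 μ 2 1 = μ⁻¹ by norm_num [lam7, show ((2:Fin 4):ℕ) = 2 from rfl, show ((3:Fin 4):ℕ) = 3 from rfl], hinv] at this
  have c30 : z 3 * z 0 = star μ • (z 0 * z 3) := by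
    have := h1 3 0; rwa [show lam7 μ 3 0 = μ⁻¹ by norm_num [lam7, show ((2:Fin 4):ℕ) = 2 from rfl, show ((3:Fin 4):ℕ) = 3 from rfl], hinv] at this
  have c23 : z 2 * z 3 = z 3 * z 2 := by
    have := h1 2 3; rwa [show lam7 μ 2 3 = 1 by norm_num [lam7, show ((2:Fin 4):ℕ) = 2 from rfl, show ((3:Fin 4):ℕ) = 3 from rfl], one_smul] at this
  have a00 : star (z 0) * z 0 = z 0 * star (z 0) := by
    have := h2 0 0; rwa [show lam7 μ 0 0 = 1 by norm_num [lam7, show ((2:Fin 4):ℕ) = 2 from rfl, show ((3:Fin 4):ℕ) = 3 from rfl], one_smul] at this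
  have a11 : star (z 1) * z 1 = z 1 * star (z 1) := by
    have := h2 1 1; rwa [show lam7 μ 1 1 = 1 by norm_num [lam7, show ((2:Fin 4):ℕ) = 2 from rfl, show ((3:Fin 4):ℕ) = 3 from rfl], one_smul] at this
  have a22 : star (z 2) * z 2 = z 2 * star (z 2) := by
    have := h2 2 2; rwa [show lam7 μ 2 2 = 1 by norm_num [lam7, show ((2:Fin 4):ℕ) = 2 from rfl, show ((3:Fin 4):ℕ) = 3 from rfl], one_smul] at this
  have a33 : star (z 3) * z 3 = z 3 * star (z 3) := by
    have := h2 3 3; rwa [show lam7 μ 3 3 = 1 by norm_num [lam7, show ((2:Fin 4):ℕ) = 2 from rfl, show ((3:Fin 4):ℕ) = 3 from rfl], one_smul] at this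
  have a13 : star (z 1) * z 3 = star μ • (z 3 * star (z 1)) := by
    have := h2 1 3; rwa [show lam7 μ 3 1 = μ⁻¹ by norm_num [lam7, show ((2:Fin 4):ℕ) = 2 from rfl, show ((3:Fin 4):ℕ) = 3 from rfl], hinv] at this
  have a02 : star (z 0) * z 2 = star μ • (z 2 * star (z 0)) := by
    have := h2 0 2; rwa [show lam7 μ 2 0 = μ⁻¹ by norm_num [lam7, show ((2:Fin 4):ℕ) = 2 from rfl, show ((3:Fin 4):ℕ) = 3 from rfl], hinv] at this
  have a31 : star (z 3) * z 1 = μ • (z 1 * star (z 3)) := by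
    have := h2 3 1; rwa [show lam7 μ 1 3 = μ by norm_num [lam7, show ((2:Fin 4):ℕ) = 2 from rfl, show ((3:Fin 4):ℕ) = 3 from rfl]] at this
  have a20 : star (z 2) * z 0 = μ • (z 0 * star (z 2)) := by
    have := h2 2 0; rwa [show lam7 μ 0 2 = μ by norm_num [lam7, show ((2:Fin 4):ℕ) = 2 from rfl, show ((3:Fin 4):ℕ) = 3 from rfl]] at this
  have s10 : star (z 1) * star (z 0) = star (z 0) * star (z 1) := by
    have := h3 1 0; rwa [show lam7 μ 1 0 = 1 by norm_num [lam7, show ((2:Fin 4):ℕ) = 2 from rfl, show ((3:Fin 4):ℕ) = 3 from rfl], one_smul] at this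
  have s12 : star (z 1) * star (z 2) = μ • (star (z 2) * star (z 1)) := by
    have := h3 1 2; rwa [show lam7 μ 1 2 = μ by norm_num [lam7, show ((2:Fin 4):ℕ) = 2 from rfl, show ((3:Fin 4):ℕ) = 3 from rfl]] at this
  have s03 : star (z 0) * star (z 3) = μ • (star (z 3) * star (z 0)) := by
    have := h3 0 3; rwa [show lam7 μ 0 3 = μ by norm_num [lam7, show ((2:Fin 4):ℕ) = 2 from rfl, show ((3:Fin 4):ℕ) = 3 from rfl]] at this
  have s32 : star (z 3) * star (z 2) = star (z 2) * star (z 3) := by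
    have := h3 3 2; rwa [show lam7 μ 3 2 = 1 by norm_num [lam7, show ((2:Fin 4):ℕ) = 2 from rfl, show ((3:Fin 4):ℕ) = 3 from rfl], one_smul] at this
  have e00 : (2:ℕ) • projP z 0 0 = 1 + elX z := by
    simp only [projP, psi1, psi2, Matrix.cons_val_zero, star_neg, star_star,
      mul_neg, neg_mul, neg_neg, elX]
    rw [← hsum]; module
  have e01 : (2:ℕ) • projP z 0 1 = 0 := by
    simp only [projP, psi1, psi2, Matrix.cons_val_zero, Matrix.cons_val_one,
      Matrix.head_cons, star_neg, star_star, mul_neg, neg_mul, neg_neg]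
    rw [c01]; module
  have e02 : (2:ℕ) • projP z 0 2 = elA z := by
    simp only [projP, psi1, psi2, Matrix.cons_val_zero, Matrix.cons_val_two,
      Matrix.tail_cons, Matrix.head_cons, star_neg, star_star, mul_neg, neg_mul, neg_neg, elA]
    rw [two_mul]; module
  have e03 : (2:ℕ) • projP z 0 3 = elB z := by
    simp only [projP, psi1, psi2, Matrix.cons_val_zero, Matrix.cons_val_three,
      Matrix.tail_cons, Matrix.head_cons, star_neg, star_star, mul_neg, neg_mul, neg_neg, elB]
    rw [two_mul]; module
  have e10 : (2:ℕ) • projP z 1 0 = 0 := by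
    simp only [projP, psi1, psi2, Matrix.cons_val_zero, Matrix.cons_val_one,
      Matrix.head_cons, star_neg, star_star, mul_neg, neg_mul, neg_neg]
    rw [s10]; module
  have e11 : (2:ℕ) • projP z 1 1 = 1 + elX z := by
    simp only [projP, psi1, psi2, Matrix.cons_val_one, Matrix.head_cons, Matrix.cons_val_zero,
      star_neg, star_star, mul_neg, neg_mul, neg_neg, elX]
    rw [a11, a00, ← hsum]; module
  have e12 : (2:ℕ) • projP z 1 2 = -(μ • star (elB z)) := by
    simp only [projP, psi1, psi2, Matrix.cons_val_one, Matrix.cons_val_zero, Matrix.cons_val_two,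
      Matrix.tail_cons, Matrix.head_cons, star_neg, star_star, mul_neg, neg_mul, neg_neg,
      elB, star_mul, star_add, star_ofNat]
    rw [mul_two, s12, s03]; module
  have e13 : (2:ℕ) • projP z 1 3 = star μ • star (elA z) := by
    simp only [projP, psi1, psi2, Matrix.cons_val_one, Matrix.cons_val_zero, Matrix.cons_val_three,
      Matrix.tail_cons, Matrix.head_cons, star_neg, star_star, mul_neg, neg_mul, neg_neg,
      elA, star_mul, star_add, star_ofNat]
    rw [mul_two, a13, a02]; module
  have e20 : (2:ℕ) • projP z 2 0 = star (elA z) := by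
    simp only [projP, psi1, psi2, Matrix.cons_val_zero, Matrix.cons_val_two,
      Matrix.tail_cons, Matrix.head_cons, star_neg, star_star, mul_neg, neg_mul, neg_neg,
      elA, star_mul, star_add, star_ofNat]
    rw [mul_two]; module
  have e21 : (2:ℕ) • projP z 2 1 = -(star μ • elB z) := by
    simp only [projP, psi1, psi2, Matrix.cons_val_one, Matrix.cons_val_zero, Matrix.cons_val_two,
      Matrix.tail_cons, Matrix.head_cons, star_neg, star_star, mul_neg, neg_mul, neg_neg, elB]
    rw [two_mul, c21, c30]; module
  have e22 : (2:ℕ) • projP z 2 2 = 1 - elX z := by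
    simp only [projP, psi1, psi2, Matrix.cons_val_two, Matrix.tail_cons, Matrix.head_cons,
      star_neg, star_star, mul_neg, neg_mul, neg_neg, elX]
    rw [← hsum]; module
  have e23 : (2:ℕ) • projP z 2 3 = 0 := by
    simp only [projP, psi1, psi2, Matrix.cons_val_two, Matrix.cons_val_three,
      Matrix.tail_cons, Matrix.head_cons, star_neg, star_star, mul_neg, neg_mul, neg_neg]
    rw [c23]; module
  have e30 : (2:ℕ) • projP z 3 0 = star (elB z) := by
    simp only [projP, psi1, psi2, Matrix.cons_val_zero, Matrix.cons_val_three,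
      Matrix.tail_cons, Matrix.head_cons, star_neg, star_star, mul_neg, neg_mul, neg_neg,
      elB, star_mul, star_add, star_ofNat]
    rw [mul_two]; module
  have e31 : (2:ℕ) • projP z 3 1 = μ • elA z := by
    simp only [projP, psi1, psi2, Matrix.cons_val_one, Matrix.cons_val_zero, Matrix.cons_val_three,
      Matrix.tail_cons, Matrix.head_cons, star_neg, star_star, mul_neg, neg_mul, neg_neg, elA]
    rw [two_mul, a31, a20]; module
  have e32 : (2:ℕ) • projP z 3 2 = 0 := by
    simp only [projP, psi1, psi2, Matrix.cons_val_two, Matrix.cons_val_three,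
      Matrix.tail_cons, Matrix.head_cons, star_neg, star_star, mul_neg, neg_mul, neg_neg]
    rw [s32]; module
  have e33 : (2:ℕ) • projP z 3 3 = 1 - elX z := by
    simp only [projP, psi1, psi2, Matrix.cons_val_three, Matrix.tail_cons, Matrix.head_cons,
      star_neg, star_star, mul_neg, neg_mul, neg_neg, elX]
    rw [a33, a22, ← hsum]; module
  have hM : (2 : ℕ) • projP z =
      !![1 + elX z, 0, elA z, elB z;
         0, 1 + elX z, -(μ • star (elB z)), (star μ) • star (elA z);
         star (elA z), -((star μ) • elB z), 1 - elX z, 0;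
         star (elB z), μ • elA z, 0, 1 - elX z] := by
    ext i j
    fin_cases i <;> fin_cases j
    · exact e00
    · exact e01
    · exact e02
    · exact e03
    · exact e10
    · exact e11
    · exact e12
    · exact e13
    · exact e20
    · exact e21
    · exact e22
    · exact e23
    · exact e30
    · exact e31
    · exact e32
    · exact e33
  refine ⟨?_, hM⟩
  intro i j
  set S := StarAlgebra.adjoin ℂ ({elA z, elB z, elX z} : Set A) with hS
  have hA : elA z ∈ S := StarAlgebra.subset_adjoin ℂ _ (by simp)
  have hB : elB z ∈ S := StarAlgebra.subset_adjoin ℂ _ (by simp)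
  have hX : elX z ∈ S := StarAlgebra.subset_adjoin ℂ _ (by simp)
  have key : ((2 : ℕ) • projP z) i j ∈ S := by
    rw [hM]
    fin_cases i <;> fin_cases j <;>
      simp only [Matrix.cons_val', Matrix.cons_val_zero, Matrix.cons_val_one, Matrix.head_cons,
        Matrix.cons_val_two, Matrix.cons_val_three, Matrix.tail_cons, Matrix.head_fin_const,
        Matrix.empty_val', Matrix.cons_val_fin_one, Matrix.of_apply] <;>
      apply_rules [add_mem, sub_mem, neg_mem, one_mem, zero_mem, star_mem,
        SMulMemClass.smul_mem, hA, hB, hX]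
  have : projP z i j = (2:ℂ)⁻¹ • (((2 : ℕ) • projP z) i j) := by
    rw [Matrix.smul_apply, ← Nat.cast_smul_eq_nsmul ℂ, smul_smul]
    norm_num
  rw [this]
  exact SMulMemClass.smul_mem _ key
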